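/- Let M be a monoid generated by a finite set 𝒜. Then M is (1)-sofic with respect to 𝒜 if and only if M is (2)-sofic. -/

import Mathlib

/-- Normalized Hamming distance between two self-maps of a (finite) type. -/
noncomputable def dHam {X : Type} (f g : X → X) : ℝ :=
  (({x : X | f x ≠ g x}).ncard : ℝ) / (Nat.card X)

/-- A `(K, ε)`-action of a monoid `M` on a type `X` (intended finite and nonempty):
(i) approximate multiplicativity on `K`, (ii) the identity acts approximately as `id`,
(iii) distinct elements of `K` act almost everywhere differently. -/
def IsKEAction {M : Type*} [Monoid M] (K : Finset M) (ε : ℝ) {X : Type}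
    (ψ : M → X → X) : Prop :=
  (∀ s ∈ K, ∀ t ∈ K, s * t ∈ K → dHam (ψ (s * t)) (ψ s ∘ ψ t) ≤ ε) ∧
  ((1 : M) ∈ K → dHam (ψ 1) id ≤ ε) ∧
  (∀ s ∈ K, ∀ t ∈ K, s ≠ t → 1 - ε ≤ dHam (ψ s) (ψ t))

/-- A monoid is (2)-sofic if for every finite `K ⊆ M` and every `ε > 0` it admits a
`(K, ε)`-action on some nonempty finite set. -/
def IsSofic2 (M : Type*) [Monoid M] : Prop :=
  ∀ (K : Finset M) (ε : ℝ), 0 < ε →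
    ∃ (X : Type), Finite X ∧ Nonempty X ∧ ∃ ψ : M → X → X, IsKEAction K ε ψ

/-- `reach E r x y` : there is a directed path of length at most `r` from `x` to `y`
in the directed labeled graph with edge relation `E` (an edge from `x` to `y`
labeled `a` iff `E x a y`). -/
def reach {V A : Type*} (E : V → A → V → Prop) : ℕ → V → V → Prop
  | 0, x, y => x = y
  | n + 1, x, y => reach E n x y ∨ ∃ z a, reach E n x z ∧ E z a y

theorem reach_self {V A : Type*} (E : V → A → V → Prop) (r : ℕ) (x : V) :
    reach E r x x := by
  induction r with
  | zero => rfl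
  | succ n ih => exact Or.inl ih

/-- `BallIso E x E' x' r` : the ball of radius `r` centered at `x` in the directed
`A`-labeled graph `(V, E)` (the subgraph induced on vertices at directed distance `≤ r`
from `x`, rooted at `x`) is isomorphic, as a rooted directed `A`-labeled graph, to the
ball of radius `r` centered at `x'` in `(V', E')`. -/
def BallIso {V V' A : Type*} (E : V → A → V → Prop) (x : V)
    (E' : V' → A → V' → Prop) (x' : V') (r : ℕ) : Prop :=
  ∃ φ : {y : V // reach E r x y} ≃ {y : V' // reach E' r x' y},
    (φ ⟨x, reach_self E r x⟩ : {y : V' // reach E' r x' y}).1 = x' ∧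
    ∀ (y z : {y : V // reach E r x y}) (a : A),
      E y.1 a z.1 ↔ E' (φ y).1 a (φ z).1

/-- The edge relation of the left Cayley graph of `M` with respect to `𝒜`:
for each `a ∈ 𝒜` and `s ∈ M` there is an edge from `s` to `a * s` labeled `a`. -/
def cayleyE (M : Type*) [Monoid M] (𝒜 : Finset M) : M → 𝒜 → M → Prop :=
  fun s a t => t = (a : M) * s

/-- A monoid `M` generated by a finite set `𝒜` is (1)-sofic with respect to `𝒜` if for
every radius `r` and every `ε > 0` there is a finite nonempty directed `𝒜`-labeled
graph in which the proportion of vertices whose `r`-ball is isomorphic to the `r`-ball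
`M_{r,𝒜}` centered at the identity in the Cayley graph of `M` is at least `1 - ε`. -/
def IsSofic1 (M : Type*) [Monoid M] (𝒜 : Finset M) : Prop :=
  ∀ (r : ℕ) (ε : ℝ), 0 < ε →
    ∃ (V : Type), Finite V ∧ Nonempty V ∧ ∃ E : V → 𝒜 → V → Prop,
      (1 - ε) * (Nat.card V : ℝ) ≤
        (({x : V | BallIso E x (cayleyE M 𝒜) (1 : M) r}).ncard : ℝ)



/-! ### Auxiliary lemmas -/

theorem reach_mono' {V A : Type*} {E : V → A → V → Prop} {m n : ℕ} (h : m ≤ n)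
    {x y : V} (hr : reach E m x y) : reach E n x y := by
  induction n with
  | zero => exact Nat.le_zero.mp h ▸ hr
  | succ k ih =>
    rcases Nat.lt_or_ge m (k+1) with h' | h'
    · exact Or.inl (ih (Nat.lt_succ_iff.mp h'))
    · have hmk : m = k + 1 := le_antisymm h h'
      exact hmk ▸ hr

theorem reach_finite' {V A : Type*} [Finite A] (E : V → A → V → Prop)
    (hE : ∀ (z : V) (a : A), {y | E z a y}.Finite)
    (n : ℕ) (x : V) : {y | reach E n x y}.Finite := by
  induction n with
  | zero =>
    have h0 : {y | reach E 0 x y} = {x} := by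
      ext y
      exact ⟨fun h => h.symm, fun h => h.symm⟩
    rw [h0]; exact Set.finite_singleton x
  | succ k ih =>
    have hsub : {y | reach E (k+1) x y} ⊆
        {y | reach E k x y} ∪ ⋃ (z : {z // reach E k x z}) (a : A), {y | E z.1 a y} := by
      rintro y (h | ⟨z, a, hz, he⟩)
      · exact Or.inl h
      · exact Or.inr (Set.mem_iUnion.mpr ⟨⟨z, hz⟩, Set.mem_iUnion.mpr ⟨a, he⟩⟩)
    refine Set.Finite.subset ?_ hsub
    have : Finite {z // reach E k x z} := ih.to_subtype
    exact ih.union (Set.finite_iUnion fun z => Set.finite_iUnion fun a => hE z.1 a)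

open Classical in
/-- Follow the unique `a`-labeled edge if it exists, else stay put. -/
noncomputable def gstep {V A : Type*} (E : V → A → V → Prop) (a : A) (v : V) : V :=
  if h : ∃! w, E v a w then h.choose else v

lemma gstep_eq {V A : Type*} (E : V → A → V → Prop) (a : A) (v w : V)
    (h : ∃! z, E v a z) (hw : E v a w) : gstep E a v = w := by
  unfold gstep
  rw [dif_pos h]
  exact (h.choose_spec.2 w hw).symm

/-- Follow a word (head of the list is the last edge taken). -/
noncomputable def gfollow {V A : Type*} (E : V → A → V → Prop) : List A → V → V
  | [], v => v
  | a :: l, v => gstep E a (gfollow E l v)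

section followspec
variable {V : Type} {M : Type*} [Monoid M] (𝒜 : Finset M)

lemma follow_spec
    (E : V → 𝒜 → V → Prop) (R : ℕ) (y : V)
    (φ : {v : V // reach E R y v} ≃ {s : M // reach (cayleyE M 𝒜) R 1 s})
    (hφ : ∀ (v w : {v : V // reach E R y v}) (a : 𝒜),
      E v.1 a w.1 ↔ cayleyE M 𝒜 (φ v).1 a (φ w).1) :
    ∀ (l : List 𝒜) (d : ℕ), d + l.length ≤ R →
    ∀ (v : V) (s : M), reach E d y v → reach (cayleyE M 𝒜) d 1 s →
    (∀ h1 : reach E R y v, (φ ⟨v, h1⟩).1 = s) →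
    reach E (d + l.length) y (gfollow E l v) ∧
    reach (cayleyE M 𝒜) (d + l.length) 1 ((l.map Subtype.val).prod * s) ∧
    ∀ h1 : reach E R y (gfollow E l v),
      (φ ⟨gfollow E l v, h1⟩).1 = (l.map Subtype.val).prod * s := by
  intro l
  induction l with
  | nil =>
    intro d hd v s hv hs hval
    simp only [gfollow, List.length_nil, Nat.add_zero, List.map_nil, List.prod_nil, one_mul]
    exact ⟨hv, hs, hval⟩
  | cons a l ih =>
    intro d hd v s hv hs hval
    have hd' : d + l.length ≤ R := by
      simp only [List.length_cons] at hd; omega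
    obtain ⟨hv', hs', hval'⟩ := ih d hd' v s hv hs hval
    set d' := d + l.length with hd'def
    set v' := gfollow E l v with hv'def
    set p := (l.map Subtype.val).prod with hpdef
    have hdlt : d' + 1 ≤ R := by
      simp only [List.length_cons] at hd; omega
    set s' : M := (a : M) * (p * s) with hs'def
    have hCs' : reach (cayleyE M 𝒜) (d' + 1) 1 s' := Or.inr ⟨p * s, a, hs', rfl⟩
    have hCs'R : reach (cayleyE M 𝒜) R 1 s' := reach_mono' hdlt hCs'
    set w : {v : V // reach E R y v} := φ.symm ⟨s', hCs'R⟩ with hwdef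
    have hv'R : reach E R y v' := reach_mono' (le_trans (Nat.le_succ d') hdlt) hv'
    have hφw : (φ w).1 = s' := by rw [hwdef, Equiv.apply_symm_apply]
    have hEvw : E v' a w.1 := by
      rw [hφ ⟨v', hv'R⟩ w a, hval' hv'R, hφw]
      rfl
    have huniq : ∀ z : V, E v' a z → z = w.1 := by
      intro z hz
      have hzR : reach E R y z := reach_mono' hdlt (Or.inr ⟨v', a, hv', hz⟩)
      have := (hφ ⟨v', hv'R⟩ ⟨z, hzR⟩ a).mp hz
      rw [hval' hv'R] at this
      have hzval : (φ ⟨z, hzR⟩) = (⟨s', hCs'R⟩ : {s : M // reach (cayleyE M 𝒜) R 1 s}) :=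
        Subtype.ext this
      have : (⟨z, hzR⟩ : {v : V // reach E R y v}) = φ.symm ⟨s', hCs'R⟩ :=
        (Equiv.eq_symm_apply φ).mpr hzval
      exact congrArg Subtype.val this
    have hex : ∃! z, E v' a z := ⟨w.1, hEvw, huniq⟩
    have hstep : gstep E a v' = w.1 := gstep_eq E a v' w.1 hex hEvw
    have hfoll : gfollow E (a :: l) v = w.1 := by
      show gstep E a (gfollow E l v) = w.1
      rw [← hv'def, hstep]
    have hlen : d + (a :: l).length = d' + 1 := by
      simp only [List.length_cons, hd'def]; omega
    have hprod : ((a :: l).map Subtype.val).prod * s = s' := by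
      simp only [List.map_cons, List.prod_cons, hs'def, hpdef, mul_assoc]
    rw [hfoll, hlen, hprod]
    refine ⟨reach_mono' (le_refl _) (Or.inr ⟨v', a, hv', hEvw⟩), hCs', ?_⟩
    intro h1
    have : (⟨w.1, h1⟩ : {v : V // reach E R y v}) = w := Subtype.ext rfl
    rw [this, hφw]
end followspec

section dham
variable {X : Type} [Finite X] [Nonempty X]

lemma cardX_pos : (0:ℝ) < (Nat.card X : ℝ) := by exact_mod_cast Nat.card_pos

omit [Nonempty X] in
lemma ncard_compl_real (G : Set X) :
    ((Gᶜ).ncard : ℝ) = (Nat.card X : ℝ) - G.ncard := by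
  have h := Set.ncard_add_ncard_compl G
  have h2 : (G.ncard : ℝ) + (Gᶜ).ncard = (Nat.card X : ℝ) := by exact_mod_cast h
  linarith

lemma dHam_le_of_agree {f g : X → X} {G : Set X} {c : ℝ}
    (hfg : ∀ x ∈ G, f x = g x) (hc : (1 - c) * (Nat.card X : ℝ) ≤ G.ncard) :
    dHam f g ≤ c := by
  have hpos : (0:ℝ) < (Nat.card X : ℝ) := cardX_pos
  have hsub : {x : X | f x ≠ g x} ⊆ Gᶜ := fun x hx hxG => hx (hfg x hxG)
  have h1 : (({x : X | f x ≠ g x}).ncard : ℝ) ≤ ((Gᶜ).ncard : ℝ) :=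
    Nat.cast_le.mpr (Set.ncard_le_ncard hsub (Set.toFinite _))
  rw [ncard_compl_real] at h1
  rw [dHam, div_le_iff₀ hpos]
  nlinarith

lemma dHam_ge_of_disagree {f g : X → X} {G : Set X} {c : ℝ}
    (hfg : ∀ x ∈ G, f x ≠ g x) (hc : (1 - c) * (Nat.card X : ℝ) ≤ G.ncard) :
    1 - c ≤ dHam f g := by
  have hpos : (0:ℝ) < (Nat.card X : ℝ) := cardX_pos
  have hsub : G ⊆ {x : X | f x ≠ g x} := fun x hx => hfg x hx
  have h1 : (G.ncard : ℝ) ≤ (({x : X | f x ≠ g x}).ncard : ℝ) :=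
    Nat.cast_le.mpr (Set.ncard_le_ncard hsub (Set.toFinite _))
  rw [dHam, le_div_iff₀ hpos]
  linarith

lemma ncard_ne_le_of_dHam_le {f g : X → X} {c : ℝ} (h : dHam f g ≤ c) :
    (({x : X | f x ≠ g x}).ncard : ℝ) ≤ c * (Nat.card X : ℝ) := by
  have hpos : (0:ℝ) < (Nat.card X : ℝ) := cardX_pos
  rw [dHam, div_le_iff₀ hpos] at h
  exact h

lemma ncard_eq_le_of_dHam_ge {f g : X → X} {c : ℝ} (h : 1 - c ≤ dHam f g) :
    (({x : X | f x = g x}).ncard : ℝ) ≤ c * (Nat.card X : ℝ) := by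
  have hpos : (0:ℝ) < (Nat.card X : ℝ) := cardX_pos
  rw [dHam, le_div_iff₀ hpos] at h
  have hce : {x : X | f x = g x} = {x : X | f x ≠ g x}ᶜ := by
    ext x; simp [Set.mem_compl_iff]
  rw [hce, ncard_compl_real]
  linarith

omit [Finite X] [Nonempty X] in
lemma ncard_biUnion_le_real {ι : Type*} (s : Finset ι) (f : ι → Set X) {b : ℝ}
    (h : ∀ i ∈ s, ((f i).ncard : ℝ) ≤ b) :
    ((⋃ i ∈ s, f i).ncard : ℝ) ≤ s.card * b := by
  classical
  induction s using Finset.induction_on with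
  | empty => simp
  | insert a t hi ih =>
    rw [Finset.set_biUnion_insert]
    have h1 : ((f a ∪ ⋃ i ∈ t, f i).ncard : ℝ) ≤
        ((f a).ncard : ℝ) + ((⋃ i ∈ t, f i).ncard : ℝ) := by
      exact_mod_cast Set.ncard_union_le _ _
    have h2 := ih (fun i hi => h i (Finset.mem_insert_of_mem hi))
    have h3 := h a (Finset.mem_insert_self a t)
    rw [Finset.card_insert_of_notMem hi]
    push_cast
    linarith
end dham

theorem sofic2_to_sofic1 {M : Type*} [Monoid M] (𝒜 : Finset M)
    (h : IsSofic2 M) : IsSofic1 M 𝒜 := by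
  classical
  intro r ε hε
  set C := cayleyE M 𝒜 with hC
  have hCfin : ∀ n, {y : M | reach C n 1 y}.Finite := by
    intro n
    apply reach_finite'
    intro z a
    have : {y : M | C z a y} = {(a : M) * z} := by
      ext y; exact Iff.rfl
    rw [this]; exact Set.finite_singleton _
  obtain ⟨K, hKmem'⟩ : ∃ K : Finset M, ∀ s : M, s ∈ K ↔ reach C (r+1) 1 s :=
    ⟨(hCfin (r+1)).toFinset, fun s => by rw [Set.Finite.mem_toFinset]; rfl⟩
  have hKmem : ∀ {s : M}, s ∈ K ↔ reach C (r+1) 1 s := fun {s} => hKmem' s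
  set Nr : ℝ := 1 + 2 * (K.card : ℝ) * (K.card : ℝ) with hNr
  have hNrpos : 0 < Nr := by positivity
  set δ : ℝ := ε / Nr with hδdef
  have hδ : 0 < δ := div_pos hε hNrpos
  obtain ⟨X, hXfin, hXne, ψ, hψm, hψ1, hψsep⟩ := h K δ hδ
  have _ : Finite X := hXfin
  have _ : Nonempty X := hXne
  set E : X → 𝒜 → X → Prop := fun v a w => ψ (a : M) v = w with hE
  set Bone : Set X := {x | ψ 1 x ≠ x} with hBone
  set Bm : M × M → Set X :=
    fun p => {x | p.1 * p.2 ∈ K ∧ ψ (p.1 * p.2) x ≠ ψ p.1 (ψ p.2 x)} with hBm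
  set Bs : M × M → Set X :=
    fun p => {x | p.1 ≠ p.2 ∧ ψ p.1 x = ψ p.2 x} with hBs
  set Bad : Set X := Bone ∪ ⋃ p ∈ K ×ˢ K, (Bm p ∪ Bs p) with hBad
  have cardpos : (0:ℝ) < (Nat.card X : ℝ) := cardX_pos
  have h1K : (1 : M) ∈ K := hKmem.mpr (reach_self C (r+1) 1)
  have hBoneCard : ((Bone).ncard : ℝ) ≤ δ * (Nat.card X : ℝ) := by
    have := ncard_ne_le_of_dHam_le (hψ1 h1K)
    have hseteq : {x : X | ψ 1 x ≠ id x} = Bone := rfl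
    rwa [hseteq] at this
  have hBmCard : ∀ p ∈ K ×ˢ K, ((Bm p).ncard : ℝ) ≤ δ * (Nat.card X : ℝ) := by
    rintro ⟨s, t⟩ hp
    rw [Finset.mem_product] at hp
    by_cases hst : s * t ∈ K
    · have := ncard_ne_le_of_dHam_le (hψm s hp.1 t hp.2 hst)
      have hsub : Bm (s, t) ⊆ {x : X | ψ (s*t) x ≠ (ψ s ∘ ψ t) x} := by
        intro x hx; exact hx.2
      calc ((Bm (s,t)).ncard : ℝ) ≤ _ :=
            Nat.cast_le.mpr (Set.ncard_le_ncard hsub (Set.toFinite _))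
        _ ≤ δ * (Nat.card X : ℝ) := this
    · have : Bm (s, t) = ∅ := by
        ext x; simp only [hBm, Set.mem_setOf_eq, Set.mem_empty_iff_false, iff_false]
        rintro ⟨h1, _⟩; exact hst h1
      rw [this]; simp; positivity
  have hBsCard : ∀ p ∈ K ×ˢ K, ((Bs p).ncard : ℝ) ≤ δ * (Nat.card X : ℝ) := by
    rintro ⟨s, t⟩ hp
    rw [Finset.mem_product] at hp
    by_cases hst : s ≠ t
    · have := ncard_eq_le_of_dHam_ge (hψsep s hp.1 t hp.2 hst)
      have hsub : Bs (s, t) ⊆ {x : X | ψ s x = ψ t x} := fun x hx => hx.2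
      calc ((Bs (s,t)).ncard : ℝ) ≤ _ :=
            Nat.cast_le.mpr (Set.ncard_le_ncard hsub (Set.toFinite _))
        _ ≤ δ * (Nat.card X : ℝ) := this
    · have : Bs (s, t) = ∅ := by
        ext x; simp only [hBs, Set.mem_setOf_eq, Set.mem_empty_iff_false, iff_false]
        rintro ⟨h1, _⟩; exact hst h1
      rw [this]; simp; positivity
  have hBadCard : ((Bad).ncard : ℝ) ≤ ε * (Nat.card X : ℝ) := by
    have hu : ((⋃ p ∈ K ×ˢ K, (Bm p ∪ Bs p)).ncard : ℝ) ≤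
        (K ×ˢ K).card * (2 * δ * (Nat.card X : ℝ)) := by
      apply ncard_biUnion_le_real
      intro p hp
      have h1 : ((Bm p ∪ Bs p).ncard : ℝ) ≤ ((Bm p).ncard : ℝ) + ((Bs p).ncard : ℝ) := by
        exact_mod_cast Set.ncard_union_le _ _
      have := hBmCard p hp; have := hBsCard p hp
      linarith
    have h2 : ((Bad).ncard : ℝ) ≤ ((Bone).ncard : ℝ) +
        ((⋃ p ∈ K ×ˢ K, (Bm p ∪ Bs p)).ncard : ℝ) := by
      exact_mod_cast Set.ncard_union_le _ _
    have hKsq : ((K ×ˢ K).card : ℝ) = (K.card : ℝ) * (K.card : ℝ) := by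
      rw [Finset.card_product]; push_cast; ring
    have hδN : δ * Nr = ε := div_mul_cancel₀ ε (ne_of_gt hNrpos)
    have hδnn : 0 ≤ δ := le_of_lt hδ
    rw [hKsq] at hu
    nlinarith [hu, h2, hBoneCard, mul_pos cardpos hδ]
  set G : Set X := Badᶜ with hG
  have hGcard : (1 - ε) * (Nat.card X : ℝ) ≤ (G.ncard : ℝ) := by
    rw [hG, ncard_compl_real]
    linarith
  have hmemK1 : ∀ {s : M} {n : ℕ}, n ≤ r + 1 → reach C n 1 s → s ∈ K :=
    fun h hr => hKmem.mpr (reach_mono' h hr)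
  have hAmem : ∀ a : 𝒜, (a : M) ∈ K := by
    intro a
    apply hKmem.mpr
    refine Or.inr ⟨1, a, reach_self C r 1, ?_⟩
    exact (mul_one (a : M)).symm
  have key : ∀ x ∈ G, BallIso E x C 1 r := by
    intro x hx
    have hnb : x ∉ Bad := hx
    have hx1 : ψ 1 x = x := by
      by_contra hc
      exact hnb (Or.inl hc)
    have hxm : ∀ (p : M × M), p ∈ K ×ˢ K → p.1 * p.2 ∈ K →
        ψ (p.1 * p.2) x = ψ p.1 (ψ p.2 x) := by
      intro p hp hK'
      by_contra hc
      exact hnb (Or.inr (Set.mem_biUnion hp (Or.inl ⟨hK', hc⟩)))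
    have hxs : ∀ (p : M × M), p ∈ K ×ˢ K → p.1 ≠ p.2 → ψ p.1 x ≠ ψ p.2 x := by
      intro p hp hne hc
      exact hnb (Or.inr (Set.mem_biUnion hp (Or.inr ⟨hne, hc⟩)))
    have F1 : ∀ (a : 𝒜) (s : M), reach C r 1 s → ψ ((a:M) * s) x = ψ (a:M) (ψ s x) := by
      intro a s hs
      have hsK : s ∈ K := hmemK1 (Nat.le_succ r) hs
      have hasK : (a:M) * s ∈ K := hKmem.mpr (Or.inr ⟨s, a, hs, rfl⟩)
      exact hxm ((a:M), s) (Finset.mem_product.mpr ⟨hAmem a, hsK⟩) hasK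
    have F2 : ∀ s t : M, reach C (r+1) 1 s → reach C (r+1) 1 t →
        ψ s x = ψ t x → s = t := by
      intro s t hs ht heq
      by_contra hne
      exact hxs (s, t) (Finset.mem_product.mpr ⟨hKmem.mpr hs, hKmem.mpr ht⟩) hne heq
    have imageLem : ∀ n, n ≤ r → ∀ s : M, reach C n 1 s → reach E n x (ψ s x) := by
      intro n
      induction n with
      | zero =>
        intro _ s hs
        have h1s : (1 : M) = s := hs
        show x = ψ s x
        rw [← h1s, hx1]
      | succ k ih =>
        intro hk s hs
        rcases hs with hs | ⟨z, a, hz, he⟩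
        · exact Or.inl (ih (Nat.le_of_succ_le hk) s hs)
        · refine Or.inr ⟨ψ z x, a, ih (Nat.le_of_succ_le hk) z hz, ?_⟩
          show ψ (a:M) (ψ z x) = ψ s x
          rw [he]
          exact (F1 a z (reach_mono' (Nat.le_of_succ_le hk) hz)).symm
    have surjLem : ∀ n, n ≤ r → ∀ y : X, reach E n x y →
        ∃ s : M, reach C n 1 s ∧ y = ψ s x := by
      intro n
      induction n with
      | zero =>
        intro _ y hy
        have hxy : x = y := hy
        exact ⟨1, rfl, by rw [← hxy, hx1]⟩
      | succ k ih =>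
        intro hk y hy
        rcases hy with hy | ⟨z, a, hz, he⟩
        · obtain ⟨s, hs, hys⟩ := ih (Nat.le_of_succ_le hk) y hy
          exact ⟨s, Or.inl hs, hys⟩
        · obtain ⟨s, hs, hzs⟩ := ih (Nat.le_of_succ_le hk) z hz
          refine ⟨(a:M) * s, Or.inr ⟨s, a, hs, rfl⟩, ?_⟩
          have : ψ (a:M) z = y := he
          rw [← this, hzs]
          exact (F1 a s (reach_mono' (Nat.le_of_succ_le hk) hs)).symm
    have Φdef : ∀ s : {s : M // reach C r 1 s}, reach E r x (ψ s.1 x) :=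
      fun s => imageLem r le_rfl s.1 s.2
    set Φ : {s : M // reach C r 1 s} → {y : X // reach E r x y} :=
      fun s => ⟨ψ s.1 x, Φdef s⟩ with hΦ
    have hΦbij : Function.Bijective Φ := by
      constructor
      · intro s t hst
        have : ψ s.1 x = ψ t.1 x := congrArg Subtype.val hst
        exact Subtype.ext (F2 s.1 t.1 (reach_mono' (Nat.le_succ r) s.2)
          (reach_mono' (Nat.le_succ r) t.2) this)
      · rintro ⟨y, hy⟩
        obtain ⟨s, hs, hys⟩ := surjLem r le_rfl y hy
        exact ⟨⟨s, hs⟩, Subtype.ext hys.symm⟩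
    set e := Equiv.ofBijective Φ hΦbij with hedef
    refine ⟨e.symm, ?_, ?_⟩
    · have h1 : e ⟨1, reach_self C r 1⟩ = ⟨x, reach_self E r x⟩ := by
        apply Subtype.ext
        show ψ 1 x = x
        exact hx1
      have := e.symm_apply_eq.mpr h1.symm
      rw [this]
    · intro y z a
      have he_app : ∀ u, (e u).1 = ψ u.1 x := fun u => rfl
      have hy : y.1 = ψ (e.symm y).1 x := by
        rw [← he_app (e.symm y), e.apply_symm_apply]
      have hz : z.1 = ψ (e.symm z).1 x := by
        rw [← he_app (e.symm z), e.apply_symm_apply]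
      set s := (e.symm y) with hsdef
      set t := (e.symm z) with htdef
      rw [hy, hz]
      constructor
      · intro hEyz
        have : ψ ((a:M) * s.1) x = ψ t.1 x := by
          rw [F1 a s.1 s.2]
          exact hEyz
        have has : reach C (r+1) 1 ((a:M) * s.1) := Or.inr ⟨s.1, a, s.2, rfl⟩
        exact (F2 _ _ has (reach_mono' (Nat.le_succ r) t.2) this).symm
      · intro hCst
        show ψ (a:M) (ψ s.1 x) = ψ t.1 x
        rw [← F1 a s.1 s.2, ← hCst]
  refine ⟨X, hXfin, hXne, E, ?_⟩
  have hsub : G ⊆ {x : X | BallIso E x C 1 r} := key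
  have : (G.ncard : ℝ) ≤ (({x : X | BallIso E x C 1 r}).ncard : ℝ) :=
    Nat.cast_le.mpr (Set.ncard_le_ncard hsub (Set.toFinite _))
  calc (1 - ε) * (Nat.card X : ℝ) ≤ (G.ncard : ℝ) := hGcard
    _ ≤ _ := this

theorem sofic1_to_sofic2 {M : Type*} [Monoid M] (𝒜 : Finset M)
    (h𝒜 : Submonoid.closure (𝒜 : Set M) = ⊤) (h : IsSofic1 M 𝒜) : IsSofic2 M := by
  classical
  intro K ε hε
  have hword_ex : ∀ s : M, ∃ l : List 𝒜, (l.map Subtype.val).prod = s := by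
    intro s
    have hs : s ∈ Submonoid.closure (𝒜 : Set M) := h𝒜 ▸ Submonoid.mem_top s
    obtain ⟨l, hl, hprod⟩ := Submonoid.exists_list_of_mem_closure hs
    refine ⟨l.pmap (fun a ha => (⟨a, ha⟩ : 𝒜)) hl, ?_⟩
    rw [List.map_pmap]
    simpa using hprod
  choose word hword using hword_ex
  set r := K.sup (fun s => (word s).length) with hrdef
  have hlen : ∀ s ∈ K, (word s).length ≤ r :=
    fun s hs => Finset.le_sup (f := fun s => (word s).length) hs
  set R := 2 * r + 1 with hRdef
  obtain ⟨V, hVfin, hVne, E, hcount⟩ := h R ε hε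
  have _ : Finite V := hVfin
  have _ : Nonempty V := hVne
  set ψ : M → V → V := fun s v => gfollow E (word s) v with hψdef
  set G : Set V := {x : V | BallIso E x (cayleyE M 𝒜) (1 : M) R} with hGdef
  have main : ∀ y ∈ G,
      (∀ s ∈ K, ∀ t ∈ K, s * t ∈ K → ψ (s * t) y = ψ s (ψ t y)) ∧
      ((1 : M) ∈ K → ψ 1 y = y) ∧
      (∀ s ∈ K, ∀ t ∈ K, s ≠ t → ψ s y ≠ ψ t y) := by
    intro y hy
    obtain ⟨φ, hroot, hedge⟩ := hy
    have hbase : ∀ h1 : reach E R y y, (φ ⟨y, h1⟩).1 = 1 := by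
      intro h1
      have : (⟨y, h1⟩ : {v : V // reach E R y v}) = ⟨y, reach_self E R y⟩ :=
        Subtype.ext rfl
      rw [this]; exact hroot
    have ptEq : ∀ (u1 u2 : V) (h1 : reach E R y u1) (h2 : reach E R y u2),
        (φ ⟨u1, h1⟩).1 = (φ ⟨u2, h2⟩).1 → u1 = u2 := by
      intro u1 u2 h1 h2 hval
      have := φ.injective (Subtype.ext hval)
      exact congrArg Subtype.val this
    have run : ∀ s ∈ K,
        reach E ((word s).length) y (ψ s y) ∧
        reach (cayleyE M 𝒜) ((word s).length) 1 (s * 1) ∧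
        ∀ h1 : reach E R y (ψ s y), (φ ⟨ψ s y, h1⟩).1 = s * 1 := by
      intro s hs
      have hle : 0 + (word s).length ≤ R := by
        have := hlen s hs; omega
      have := follow_spec 𝒜 E R y φ hedge (word s) 0 hle y 1
        (reach_self E 0 y) (reach_self (cayleyE M 𝒜) 0 1) hbase
      rw [hword s] at this
      simpa using this
    refine ⟨?_, ?_, ?_⟩
    · intro s hs t ht hst
      obtain ⟨ht1, ht2, ht3⟩ := run t ht
      have hle2 : (word t).length + (word s).length ≤ R := by
        have := hlen s hs; have := hlen t ht; omega
      have hcomp := follow_spec 𝒜 E R y φ hedge (word s) ((word t).length) hle2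
        (ψ t y) (t * 1) ht1 ht2 ht3
      rw [hword s] at hcomp
      obtain ⟨hc1, hc2, hc3⟩ := hcomp
      obtain ⟨hst1, hst2, hst3⟩ := run (s * t) hst
      have hstR : reach E R y (ψ (s * t) y) := by
        refine reach_mono' ?_ hst1
        have := hlen (s * t) hst; omega
      have hcompR : reach E R y (gfollow E (word s) (ψ t y)) := by
        refine reach_mono' ?_ hc1
        omega
      refine ptEq _ _ hstR hcompR ?_
      rw [hst3 hstR, hc3 hcompR]
      rw [mul_one, mul_one]
    · intro h1K
      obtain ⟨h11, h12, h13⟩ := run 1 h1K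
      have h1R : reach E R y (ψ 1 y) := by
        refine reach_mono' ?_ h11
        have := hlen 1 h1K; omega
      refine ptEq _ _ h1R (reach_self E R y) ?_
      rw [h13 h1R, hbase (reach_self E R y), mul_one]
    · intro s hs t ht hne heq
      obtain ⟨hs1, _, hs3⟩ := run s hs
      obtain ⟨ht1, _, ht3⟩ := run t ht
      have hsR : reach E R y (ψ s y) := by
        refine reach_mono' ?_ hs1
        have := hlen s hs; omega
      have htR : reach E R y (ψ t y) := by
        refine reach_mono' ?_ ht1
        have := hlen t ht; omega
      have : (⟨ψ s y, hsR⟩ : {v : V // reach E R y v}) = ⟨ψ t y, htR⟩ :=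
        Subtype.ext heq
      have hvals : s * 1 = t * 1 := by
        rw [← hs3 hsR, ← ht3 htR, this]
      rw [mul_one, mul_one] at hvals
      exact hne hvals
  refine ⟨V, hVfin, hVne, ψ, ?_, ?_, ?_⟩
  · intro s hs t ht hst
    exact dHam_le_of_agree (G := G)
      (fun y hy => (main y hy).1 s hs t ht hst) hcount
  · intro h1K
    exact dHam_le_of_agree (G := G)
      (fun y hy => (main y hy).2.1 h1K) hcount
  · intro s hs t ht hne
    exact dHam_ge_of_disagree (G := G)
      (fun y hy => (main y hy).2.2 s hs t ht hne) hcount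

/-- A monoid generated by a finite set `𝒜` is (1)-sofic with respect to `𝒜` if and
only if it is (2)-sofic. -/
theorem sofic1_iff_sofic2 {M : Type*} [Monoid M] (𝒜 : Finset M)
    (h𝒜 : Submonoid.closure (𝒜 : Set M) = ⊤) :
    IsSofic1 M 𝒜 ↔ IsSofic2 M :=
  ⟨fun h1 => sofic1_to_sofic2 𝒜 h𝒜 h1, fun h2 => sofic2_to_sofic1 𝒜 h2⟩
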